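/- In the U_t(sl-hat_{n+1|m}) vertex model, for all integers M,K ≥ 1 and all colours 0 ≤ i < j ≤ n+m, the rectangular partition function with boundary colours i and j freezes completely: ⟨(i^M) ⊗ (j^K)| Z_{M,K}(x;y) |(j^K) ⊗ (i^M)⟩ = t^{[i>0]·MK} · ∏_{a=1}^{M} ∏_{b=1}^{K} (y_b − x_a)/(y_b − t x_a), where [i>0] equals 1 if i > 0 and 0 if i = 0. -/

import Mathlib

open scoped BigOperators

noncomputable section

namespace ConicVertex

/-- The field `ℚ(q,t,x_0,x_1,…)` of rational functions in countably many
algebraically independent indeterminates. -/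
abbrev K : Type := FractionRing (MvPolynomial ℕ ℚ)

/-- The `i`-th indeterminate, viewed inside the fraction field. -/
def vr (i : ℕ) : K := algebraMap (MvPolynomial ℕ ℚ) K (MvPolynomial.X i)

/-- The Macdonald parameter `q`. -/
def qv : K := vr 0

/-- The Macdonald parameter `t`. -/
def tv : K := vr 1

/-- `ζ(u) = (1-qu)(1-t⁻¹u)/((1-u)(1-qt⁻¹u))`. -/
def zetaF (u : K) : K := ((1 - qv * u) * (1 - tv⁻¹ * u)) / ((1 - u) * (1 - qv * tv⁻¹ * u))

/-- Functions of the variables `x_0, x_1, …` (a function of `k` variables only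
reads the first `k` arguments). -/
abbrev SF : Type := (ℕ → K) → K

/-- The `a`-th smallest element of the finite set `S ⊆ ℕ`. -/
def sortedIdx (S : Finset ℕ) (a : ℕ) : ℕ := (S.sort (· ≤ ·)).getD a 0

/-- The shuffle product of a function `F` of `k` variables with a function `G`
of `l` variables:
`(F*G)(x_1…x_{k+l}) = Σ_{S, |S|=k} F(x_S) G(x_{Sᶜ}) Π_{i∈S,j∈Sᶜ} ζ(x_i/x_j)`. -/
def shuffleMul (k l : ℕ) (F G : SF) : SF := fun x =>
  ∑ S ∈ Finset.powersetCard k (Finset.range (k + l)),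
    F (fun a => x (sortedIdx S a)) *
      G (fun a => x (sortedIdx (Finset.range (k + l) \ S) a)) *
      ∏ i ∈ S, ∏ j ∈ Finset.range (k + l) \ S, zetaF (x i / x j)

/-- Iterated (left-to-right) shuffle product of a list of functions together
with their arities; returns the total arity and the product. -/
def shuffleListProd : List (ℕ × SF) → ℕ × SF
  | [] => (0, fun _ => 1)
  | (k, F) :: rest =>
      let p := shuffleListProd rest
      (k + p.1, shuffleMul k p.1 F p.2)

/-- The power-sum–like elements `S_k` of the shuffle algebra. -/
def Sel (k : ℕ) : SF := fun x =>
  ((1 - qv) ^ k * (1 - tv⁻¹) ^ k / ((tv - qv) ^ k * (1 - (tv ^ k)⁻¹))) *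
    ∑ σ : Equiv.Perm (Fin k),
      (fun y : ℕ → K =>
        ((∑ j ∈ Finset.range k, (qv / tv) ^ j * y j / y 0) /
            ∏ j ∈ Finset.range (k - 1), (1 - qv / tv * (y (j + 1) / y j))) *
          ∏ i ∈ Finset.range k, ∏ j ∈ Finset.range k,
            if i < j then zetaF (y i / y j) else 1)
        (fun a => if h : a < k then x (σ ⟨a, h⟩).val else x a)

/-- The factorised elements `E_k(p)` of the shuffle algebra. -/
def Eel (p : K) (k : ℕ) : SF := fun x =>
  ∏ i ∈ Finset.range k, ∏ j ∈ Finset.range k,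
    if i < j then
      ((x i - p * x j) * (x i - p⁻¹ * x j)) /
        ((x i - qv * tv⁻¹ * x j) * (x i - tv * qv⁻¹ * x j))
    else 1

/-- The Izergin-determinant elements `H_k(q_a)` (for the permutation `(a,b,c)`
of `(1,2,3)`). -/
def Hel (qa qb qc : K) (k : ℕ) : SF := fun x =>
  (qa * qv * tv⁻¹) ^ (k * (k - 1) / 2) *
    ((∏ i ∈ Finset.range k, ∏ j ∈ Finset.range k, ((x i - qb * x j) * (x j - qc * x i))) /
        ∏ i ∈ Finset.range k, ∏ j ∈ Finset.range k,
          (if i = j then 1 else (x i - x j) * (x i - qv * tv⁻¹ * x j))) *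
    Matrix.det (Matrix.of fun i j : Fin k =>
      1 / ((x i.val - qb * x j.val) * (x j.val - qc * x i.val)))

/-! ### The `U_t(sl-hat_{n+1|m})` vertex model

Colours are `0,…,n+m` (`d = n+m`); colours `1,…,n` are bosonic, colours
`n+1,…,n+m` fermionic, and colours are ordered `1 ≺ 2 ≺ ⋯ ≺ n+m ≺ 0`. -/

/-- Words of length `M` in the colours `0,…,d`, indexing the basis of `V^{⊗M}`. -/
abbrev Word (d M : ℕ) := Fin M → Fin (d + 1)

/-- The position of a colour in the order `1 ≺ 2 ≺ ⋯ ≺ n+m ≺ 0`. -/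
def ordC (d : ℕ) (a : Fin (d + 1)) : ℕ := if a.val = 0 then d + 1 else a.val

/-- Matrix elements of the `R`-check matrix `Ř(u)` on `V ⊗ V`:
`Rent n d u a b c e = ⟨a,b| Ř(u) |c,e⟩`. -/
def Rent (n d : ℕ) (u : K) (a b c e : Fin (d + 1)) : K :=
  if a = b ∧ b = c ∧ c = e then (if n < a.val then (u - tv) / (1 - tv * u) else 1)
  else if a = c ∧ b = e ∧ ordC d a < ordC d b then (1 - tv) / (1 - tv * u)
  else if a = c ∧ b = e ∧ ordC d b < ordC d a then (1 - tv) * u / (1 - tv * u)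
  else if a = e ∧ b = c ∧ ordC d a < ordC d b then tv * (1 - u) / (1 - tv * u)
  else if a = e ∧ b = c ∧ ordC d b < ordC d a then (1 - u) / (1 - tv * u)
  else 0

/-- `Ř_p(u)` acting on tensor factors `p, p+1` (0-based) of `V^{⊗M}`. -/
def Rop (n d M : ℕ) (p : ℕ) (u : K) : Matrix (Word d M) (Word d M) K :=
  Matrix.of fun α β =>
    if hp : p + 1 < M then
      if ∀ j : Fin M, j.val ≠ p → j.val ≠ p + 1 → α j = β j then
        Rent n d u (α ⟨p, by omega⟩) (α ⟨p + 1, hp⟩) (β ⟨p, by omega⟩) (β ⟨p + 1, hp⟩)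
      else 0
    else 0

/-- The column operator `C_b = Ř_{M+b-1}(x_M/y_b) ⋯ Ř_b(x_1/y_b)` (in 0-based
conventions) on `V^{⊗(M+Kc)}`. -/
def Cop (n d M Kc : ℕ) (x y : ℕ → K) (b : ℕ) :
    Matrix (Word d (M + Kc)) (Word d (M + Kc)) K :=
  (((List.range M).reverse).map fun a => Rop n d (M + Kc) (b + a) (x a / y b)).prod

/-- The rectangular lattice tensor `Z_{M,Kc}(x;y) = C_1 C_2 ⋯ C_{Kc}`. -/
def Zop (n d M Kc : ℕ) (x y : ℕ → K) :
    Matrix (Word d (M + Kc)) (Word d (M + Kc)) K :=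
  ((List.range Kc).map fun b => Cop n d M Kc x y b).prod

/-- `0^N ⊗ γ`. -/
def pad0 (d N : ℕ) (γ : Word d N) : Word d (N + N) := fun j =>
  if h : j.val < N then 0 else γ ⟨j.val - N, by have := j.isLt; omega⟩

/-- `⟨γ|W_N(x;y)|δ⟩ = ⟨0^N ⊗ γ| Z_N(x;y) |0^N ⊗ δ⟩`. -/
def Wop (n d N : ℕ) (x y : ℕ → K) : Matrix (Word d N) (Word d N) K :=
  Matrix.of fun γ δ => Zop n d N N x y (pad0 d N γ) (pad0 d N δ)

/-- `W_N(x) = W_N(x_1,…,x_N; q x_1,…,q x_N)`. -/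
def Wx (n d N : ℕ) (x : ℕ → K) : Matrix (Word d N) (Word d N) K :=
  Wop n d N x fun a => qv * x a

/-- The loop weights: `c_0 = z_0`, `c_j = z_j` for bosonic `j`, `c_{n+j} = -w_j`
for fermionic colours. -/
def coefZW (n : ℕ) (z w : ℕ → K) (a : ℕ) : K := if a ≤ n then z a else -w (a - n)

/-- The graded trace `T_N(x;z,w)`. -/
def Tfun (n m N : ℕ) (x z w : ℕ → K) : K :=
  ∑ α : Word (n + m) N, (∏ i : Fin N, coefZW n z w (α i).val) * Wx n (n + m) N x α α

/-- Generic spectral parameters: `x_{a+1} := vr (2+a)` (0-based). -/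
def xg (a : ℕ) : K := vr (2 + a)

/-- Generic column spectral parameters `y`. -/
def yg (N b : ℕ) : K := vr (2 + N + b)

/-- Generic bosonic weights `z_0,…,z_n`. -/
def zg (N j : ℕ) : K := vr (2 + N + j)

/-- Generic fermionic weights `w_1,…,w_m`. -/
def wg (N n j : ℕ) : K := vr (2 + N + n + 1 + j)

/-- Swap the values of `x` at `a` and `b`. -/
def swapF (x : ℕ → K) (a b : ℕ) : ℕ → K := fun c => if c = a then x b else if c = b then x a else x c

end ConicVertex

namespace ConicVertex

set_option maxHeartbeats 1000000

section FreezeAux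

/-- The indeterminates are nonzero. -/
lemma vr_ne_zero (k : ℕ) : vr k ≠ 0 := by
  have hinj := IsFractionRing.injective (MvPolynomial ℕ ℚ) K
  simp only [vr, ne_eq, map_eq_zero_iff _ hinj]
  exact MvPolynomial.X_ne_zero k

/-- The word which is `cj` everywhere except `ci` on the window `[b, b+M]`
punctured at `b+k`. -/
def chiW (d N M b k : ℕ) (ci cj : Fin (d + 1)) : Word d N := fun p =>
  if b ≤ p.val ∧ p.val ≤ b + M ∧ p.val ≠ b + k then ci else cj

lemma chiW_apply_pos {d N M b k p : ℕ} (hp : p < N) {ci cj : Fin (d + 1)}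
    (h : b ≤ p ∧ p ≤ b + M ∧ p ≠ b + k) : chiW d N M b k ci cj ⟨p, hp⟩ = ci := if_pos h

lemma chiW_apply_neg {d N M b k p : ℕ} (hp : p < N) {ci cj : Fin (d + 1)}
    (h : ¬(b ≤ p ∧ p ≤ b + M ∧ p ≠ b + k)) : chiW d N M b k ci cj ⟨p, hp⟩ = cj := if_neg h

/-- The crossing vertex weight. -/
def wtc (iv : ℕ) (u : K) : K := (if 0 < iv then tv else 1) * ((1 - u) / (1 - tv * u))

lemma rent_support {n d : ℕ} {u : K} {a b c e : Fin (d + 1)}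
    (h : Rent n d u a b c e ≠ 0) : (a = c ∧ b = e) ∨ (a = e ∧ b = c) := by
  unfold Rent at h
  by_cases h1 : a = b ∧ b = c ∧ c = e
  · obtain ⟨rfl, rfl, rfl⟩ := h1; exact Or.inl ⟨rfl, rfl⟩
  rw [if_neg h1] at h
  by_cases h2 : a = c ∧ b = e ∧ ordC d a < ordC d b
  · exact Or.inl ⟨h2.1, h2.2.1⟩
  rw [if_neg h2] at h
  by_cases h3 : a = c ∧ b = e ∧ ordC d b < ordC d a
  · exact Or.inl ⟨h3.1, h3.2.1⟩
  rw [if_neg h3] at h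
  by_cases h4 : a = e ∧ b = c ∧ ordC d a < ordC d b
  · exact Or.inr ⟨h4.1, h4.2.1⟩
  rw [if_neg h4] at h
  by_cases h5 : a = e ∧ b = c ∧ ordC d b < ordC d a
  · exact Or.inr ⟨h5.1, h5.2.1⟩
  rw [if_neg h5] at h
  exact absurd rfl h

lemma rop_support {n d N p : ℕ} {u : K} {γ δ : Word d N}
    (h : Rop n d N p u γ δ ≠ 0) :
    ∃ hp : p + 1 < N,
      (∀ q : ℕ, ∀ hq : q < N, q ≠ p → q ≠ p + 1 → γ ⟨q, hq⟩ = δ ⟨q, hq⟩) ∧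
      ((γ ⟨p, by omega⟩ = δ ⟨p, by omega⟩ ∧ γ ⟨p + 1, hp⟩ = δ ⟨p + 1, hp⟩) ∨
       (γ ⟨p, by omega⟩ = δ ⟨p + 1, hp⟩ ∧ γ ⟨p + 1, hp⟩ = δ ⟨p, by omega⟩)) := by
  unfold Rop at h
  simp only [Matrix.of_apply] at h
  split at h
  case isTrue hp =>
    split at h
    case isTrue hfix =>
      exact ⟨hp, fun q hq h1 h2 => hfix ⟨q, hq⟩ h1 h2, rent_support h⟩
    case isFalse => exact absurd rfl h
  case isFalse => exact absurd rfl h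

lemma listprod_untouched {d N : ℕ} (L : List (Matrix (Word d N) (Word d N) K)) (q : Fin N)
    (hL : ∀ A ∈ L, ∀ γ δ : Word d N, A γ δ ≠ 0 → γ q = δ q) :
    ∀ γ δ : Word d N, L.prod γ δ ≠ 0 → γ q = δ q := by
  induction L with
  | nil =>
    intro γ δ h
    rw [List.prod_nil] at h
    by_cases hgd : γ = δ
    · rw [hgd]
    · exact absurd (Matrix.one_apply_ne hgd) h
  | cons A L ih =>
    intro γ δ h
    rw [List.prod_cons, Matrix.mul_apply] at h
    obtain ⟨ε, -, hne⟩ := Finset.exists_ne_zero_of_sum_ne_zero h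
    rw [mul_ne_zero_iff] at hne
    exact (hL A List.mem_cons_self γ ε hne.1).trans
      (ih (fun B hB => hL B (List.mem_cons_of_mem A hB)) ε δ hne.2)

lemma cop_untouched {n d M Kc : ℕ} {x y : ℕ → K} {b : ℕ} {q : Fin (M + Kc)}
    (hq : q.val < b) :
    ∀ γ δ : Word d (M + Kc), Cop n d M Kc x y b γ δ ≠ 0 → γ q = δ q := by
  apply listprod_untouched
  intro A hA γ δ h
  simp only [List.mem_map, List.mem_reverse, List.mem_range] at hA
  obtain ⟨a, ha, rfl⟩ := hA
  obtain ⟨hp, hfix, -⟩ := rop_support h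
  have := hfix q.val q.isLt (by omega) (by omega)
  simpa using this

/-- Partial column product: the top `s` `R`-matrices of a column. -/
def Bcol (n d N M : ℕ) (x y : ℕ → K) (b : ℕ) : ℕ → Matrix (Word d N) (Word d N) K
  | 0 => 1
  | s + 1 => Bcol n d N M x y b s * Rop n d N (b + (M - (s + 1))) (x (M - (s + 1)) / y b)

lemma bcol_eq_prod (n d N M : ℕ) (x y : ℕ → K) (b : ℕ) :
    ∀ s, s ≤ M → Bcol n d N M x y b s =
      (((List.range' (M - s) s).reverse).map fun a => Rop n d N (b + a) (x a / y b)).prod := by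
  intro s
  induction s with
  | zero => intro _; simp [Bcol]
  | succ s ih =>
    intro hs
    have h0 : M - (s + 1) + 1 = M - s := by omega
    have h1 : List.range' (M - (s + 1)) (s + 1) = (M - (s + 1)) :: List.range' (M - s) s := by
      rw [List.range'_succ, h0]
    show Bcol n d N M x y b s * _ = _
    rw [ih (by omega), h1, List.reverse_cons, List.map_append, List.prod_append,
      List.map_singleton, List.prod_singleton]

lemma cop_eq_bcol (n d M Kc : ℕ) (x y : ℕ → K) (b : ℕ) :
    Cop n d M Kc x y b = Bcol n d (M + Kc) M x y b M := by
  rw [bcol_eq_prod n d (M + Kc) M x y b M le_rfl, Nat.sub_self, Cop, List.range_eq_range']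

lemma chiW_ne {d N M b k k' : ℕ} {ci cj : Fin (d + 1)} (hne : ci ≠ cj)
    (hbM : b + M < N) (hk : k ≤ M) (hkk : k ≠ k') :
    chiW d N M b k ci cj ≠ chiW d N M b k' ci cj := by
  intro h
  have h2 := congrFun h ⟨b + k, by omega⟩
  simp only [chiW, Fin.val_mk] at h2
  rw [if_neg (by omega), if_pos (by omega)] at h2
  exact hne h2.symm

lemma rent_cross {n d i j : ℕ} (u : K) (hij : i < j) (hj : j ≤ d) :
    Rent n d u ⟨i, by omega⟩ ⟨j, by omega⟩ ⟨j, by omega⟩ ⟨i, by omega⟩ =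
      wtc i u := by
  have hne : (⟨i, by omega⟩ : Fin (d + 1)) ≠ ⟨j, by omega⟩ := by
    simp only [ne_eq, Fin.mk.injEq]; omega
  have hoi : ordC d ⟨i, by omega⟩ = if i = 0 then d + 1 else i := rfl
  have hoj : ordC d ⟨j, by omega⟩ = j := by
    simp only [ordC, Fin.val_mk]; rw [if_neg (by omega)]
  unfold Rent wtc
  rw [if_neg (fun h => hne h.1), if_neg (fun h => hne h.1), if_neg (fun h => hne h.1)]
  by_cases hi : 0 < i
  · rw [if_pos ⟨rfl, rfl, by rw [hoi, hoj, if_neg (by omega)]; omega⟩, if_pos hi,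
      mul_div_assoc]
  · rw [if_neg (by rintro ⟨-, -, hlt⟩; rw [hoi, hoj, if_pos (by omega)] at hlt; omega),
      if_pos ⟨rfl, rfl, by rw [hoi, hoj, if_pos (by omega)]; omega⟩, if_neg hi, one_mul]

section Col

variable {n d N M b : ℕ} {x y : ℕ → K}

lemma bcol_support {ci cj : Fin (d + 1)} (hne : ci ≠ cj) (hbM : b + M < N) :
    ∀ s, s ≤ M → ∀ δ, Bcol n d N M x y b s (chiW d N M b M ci cj) δ ≠ 0 →
      ∃ k, M - s ≤ k ∧ k ≤ M ∧ δ = chiW d N M b k ci cj := by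
  intro s
  induction s with
  | zero =>
    intro _ δ h
    refine ⟨M, by omega, le_rfl, ?_⟩
    by_contra hd
    rw [show Bcol n d N M x y b 0 = 1 from rfl] at h
    exact h (Matrix.one_apply_ne fun hh => hd hh.symm)
  | succ s ih =>
    intro hs δ h
    rw [show Bcol n d N M x y b (s + 1) = Bcol n d N M x y b s *
        Rop n d N (b + (M - (s + 1))) (x (M - (s + 1)) / y b) from rfl,
      Matrix.mul_apply] at h
    obtain ⟨γ, -, hγ⟩ := Finset.exists_ne_zero_of_sum_ne_zero h
    rw [mul_ne_zero_iff] at hγ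
    obtain ⟨k, hk1, hk2, rfl⟩ := ih (by omega) γ hγ.1
    obtain ⟨hp, hfix, hdisj⟩ := rop_support hγ.2
    rcases hdisj with ⟨e1, e2⟩ | ⟨e1, e2⟩
    · -- diagonal step : δ = γ
      refine ⟨k, by omega, hk2, ?_⟩
      funext q
      by_cases h1 : q.val = b + (M - (s + 1))
      · rw [show q = ⟨b + (M - (s + 1)), by omega⟩ from Fin.ext h1]
        exact e1.symm
      · by_cases h2 : q.val = b + (M - (s + 1)) + 1
        · rw [show q = ⟨b + (M - (s + 1)) + 1, hp⟩ from Fin.ext h2]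
          exact e2.symm
        · exact (hfix q.val q.isLt h1 h2).symm
    · -- swap step
      by_cases hk3 : b + k = b + (M - (s + 1)) + 1
      · -- the distinguished colour moves down one step
        refine ⟨M - (s + 1), by omega, by omega, ?_⟩
        funext q
        by_cases h1 : q.val = b + (M - (s + 1))
        · rw [show q = ⟨b + (M - (s + 1)), by omega⟩ from Fin.ext h1, ← e2]
          simp only [chiW, Fin.val_mk]
          exact if_congr (by omega) rfl rfl
        · by_cases h2 : q.val = b + (M - (s + 1)) + 1
          · rw [show q = ⟨b + (M - (s + 1)) + 1, hp⟩ from Fin.ext h2, ← e1]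
            simp only [chiW, Fin.val_mk]
            exact if_congr (by omega) rfl rfl
          · rw [← hfix q.val q.isLt h1 h2]
            simp only [chiW]
            exact if_congr (by omega) rfl rfl
      · -- the swap is between two equal colours : δ = γ
        by_cases hk4 : b + k = b + (M - (s + 1))
        · omega
        · refine ⟨k, by omega, hk2, ?_⟩
          funext q
          by_cases h1 : q.val = b + (M - (s + 1))
          · rw [show q = ⟨b + (M - (s + 1)), by omega⟩ from Fin.ext h1, ← e2]
            simp only [chiW, Fin.val_mk]
            exact if_congr (by omega) rfl rfl
          · by_cases h2 : q.val = b + (M - (s + 1)) + 1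
            · rw [show q = ⟨b + (M - (s + 1)) + 1, hp⟩ from Fin.ext h2, ← e1]
              simp only [chiW, Fin.val_mk]
              exact if_congr (by omega) rfl rfl
            · exact (hfix q.val q.isLt h1 h2).symm

lemma rop_entry_cross {i j p : ℕ} {u : K} {γ δ : Word d N} (hij : i < j) (hj : j ≤ d)
    (hp : p + 1 < N)
    (hfix : ∀ q : Fin N, q.val ≠ p → q.val ≠ p + 1 → γ q = δ q)
    (h1 : γ ⟨p, by omega⟩ = ⟨i, by omega⟩) (h2 : γ ⟨p + 1, hp⟩ = ⟨j, by omega⟩)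
    (h3 : δ ⟨p, by omega⟩ = ⟨j, by omega⟩) (h4 : δ ⟨p + 1, hp⟩ = ⟨i, by omega⟩) :
    Rop n d N p u γ δ = wtc i u := by
  unfold Rop
  rw [Matrix.of_apply, dif_pos hp, if_pos hfix]
  exact Eq.trans (by rw [h1, h2, h3, h4]) (rent_cross u hij hj)

lemma rop_cross {i j : ℕ} (hij : i < j) (hj : j ≤ d) (hbM : b + M < N)
    {s : ℕ} (hs : s < M) (u : K) :
    Rop n d N (b + (M - (s + 1))) u
        (chiW d N M b (M - s) ⟨i, by omega⟩ ⟨j, by omega⟩)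
        (chiW d N M b (M - (s + 1)) ⟨i, by omega⟩ ⟨j, by omega⟩) = wtc i u := by
  have hp : b + (M - (s + 1)) + 1 < N := by omega
  refine rop_entry_cross hij hj hp (fun q h1 h2 => ?_) (chiW_apply_pos (by omega) (by omega))
    (chiW_apply_neg hp (by omega)) (chiW_apply_neg (by omega) (by omega))
    (chiW_apply_pos hp (by omega))
  simp only [chiW]
  exact if_congr (by omega) rfl rfl

lemma bcol_value {i j : ℕ} (hij : i < j) (hj : j ≤ d) (hbM : b + M < N) :
    ∀ s, s ≤ M →
      Bcol n d N M x y b s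
          (chiW d N M b M ⟨i, by omega⟩ ⟨j, by omega⟩)
          (chiW d N M b (M - s) ⟨i, by omega⟩ ⟨j, by omega⟩) =
        ∏ a ∈ Finset.Ico (M - s) M, wtc i (x a / y b) := by
  have hne : (⟨i, by omega⟩ : Fin (d + 1)) ≠ ⟨j, by omega⟩ := by
    simp only [ne_eq, Fin.mk.injEq]; omega
  intro s
  induction s with
  | zero =>
    intro _
    rw [Nat.sub_zero, show Bcol n d N M x y b 0 = 1 from rfl, Matrix.one_apply_eq,
      Finset.Ico_self, Finset.prod_empty]
  | succ s ih =>
    intro hs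
    rw [show Bcol n d N M x y b (s + 1) = Bcol n d N M x y b s *
        Rop n d N (b + (M - (s + 1))) (x (M - (s + 1)) / y b) from rfl,
      Matrix.mul_apply]
    rw [Finset.sum_eq_single (chiW d N M b (M - s) ⟨i, by omega⟩ ⟨j, by omega⟩)]
    · rw [ih (by omega), rop_cross hij hj hbM (by omega : s < M),
        Finset.prod_eq_prod_Ico_succ_bot (show M - (s + 1) < M by omega),
        show M - (s + 1) + 1 = M - s from by omega, mul_comm]
    · intro γ _ hγne
      by_cases h0 : Bcol n d N M x y b s (chiW d N M b M ⟨i, by omega⟩ ⟨j, by omega⟩) γ = 0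
      · rw [h0, zero_mul]
      · obtain ⟨k, hk1, hk2, rfl⟩ := bcol_support hne hbM s (by omega) γ h0
        have hk3 : k ≠ M - s := fun hh => hγne (by rw [hh])
        have hR : Rop n d N (b + (M - (s + 1))) (x (M - (s + 1)) / y b)
            (chiW d N M b k ⟨i, by omega⟩ ⟨j, by omega⟩)
            (chiW d N M b (M - (s + 1)) ⟨i, by omega⟩ ⟨j, by omega⟩) = 0 := by
          by_contra hRne
          obtain ⟨hp, hfix, -⟩ := rop_support hRne
          have h5 := hfix (b + k) (by omega) (by omega) (by omega)
          simp only [chiW, Fin.val_mk] at h5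
          rw [if_neg (by omega), if_pos (by omega)] at h5
          exact hne h5.symm
        rw [hR, mul_zero]
    · exact fun h => absurd (Finset.mem_univ _) h

end Col

lemma zrows {n d M Kc : ℕ} (x y : ℕ → K) {i j : ℕ} (hij : i < j) (hj : j ≤ d) :
    ∀ r b, b + r = Kc →
      (((List.range' b r).map fun b' => Cop n d M Kc x y b').prod)
          (chiW d (M + Kc) M b M ⟨i, by omega⟩ ⟨j, by omega⟩)
          (chiW d (M + Kc) M Kc M ⟨i, by omega⟩ ⟨j, by omega⟩) =
        ∏ b' ∈ Finset.Ico b Kc, ∏ a ∈ Finset.range M, wtc i (x a / y b') := by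
  have hne : (⟨i, by omega⟩ : Fin (d + 1)) ≠ ⟨j, by omega⟩ := by
    simp only [ne_eq, Fin.mk.injEq]; omega
  intro r
  induction r with
  | zero =>
    intro b hb
    obtain rfl : b = Kc := by omega
    rw [List.range'_zero, List.map_nil, List.prod_nil, Matrix.one_apply_eq,
      Finset.Ico_self, Finset.prod_empty]
  | succ r ih =>
    intro b hb
    have hbK : b < Kc := by omega
    have hbM : b + M < M + Kc := by omega
    have hshift : chiW d (M + Kc) M b 0 (⟨i, by omega⟩ : Fin (d + 1)) ⟨j, by omega⟩ =
        chiW d (M + Kc) M (b + 1) M ⟨i, by omega⟩ ⟨j, by omega⟩ := by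
      funext q
      simp only [chiW]
      exact if_congr (by omega) rfl rfl
    rw [List.range'_succ, List.map_cons, List.prod_cons, Matrix.mul_apply]
    rw [Finset.sum_eq_single (chiW d (M + Kc) M (b + 1) M ⟨i, by omega⟩ ⟨j, by omega⟩)]
    · have hv := bcol_value (n := n) (x := x) (y := y) hij hj hbM M le_rfl
      rw [Nat.sub_self] at hv
      rw [cop_eq_bcol, ih (b + 1) (by omega), ← hshift, hv,
        Finset.prod_eq_prod_Ico_succ_bot hbK, ← Finset.range_eq_Ico]
    · intro γ _ hγne
      by_cases h0 : Cop n d M Kc x y b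
          (chiW d (M + Kc) M b M ⟨i, by omega⟩ ⟨j, by omega⟩) γ = 0
      · rw [h0, zero_mul]
      · rw [cop_eq_bcol] at h0
        obtain ⟨k, -, hk2, rfl⟩ := bcol_support hne hbM M le_rfl γ h0
        have hk0 : k ≠ 0 := by
          intro hk
          exact hγne (by rw [hk, hshift])
        have htail : (((List.range' (b + 1) r).map fun b' => Cop n d M Kc x y b').prod)
            (chiW d (M + Kc) M b k ⟨i, by omega⟩ ⟨j, by omega⟩)
            (chiW d (M + Kc) M Kc M ⟨i, by omega⟩ ⟨j, by omega⟩) = 0 := by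
          by_contra ht
          have h6 := listprod_untouched _ (⟨b, by omega⟩ : Fin (M + Kc)) ?_ _ _ ht
          · simp only [chiW, Fin.val_mk] at h6
            rw [if_pos (by omega), if_neg (by omega)] at h6
            exact hne h6
          · intro A hA γ' δ' hA0
            simp only [List.mem_map] at hA
            obtain ⟨b', hb', rfl⟩ := hA
            have hb'' : b + 1 ≤ b' := (List.mem_range'_1.mp hb').1
            exact cop_untouched (by simp only [Fin.val_mk]; omega) γ' δ' hA0
        rw [htail, mul_zero]
    · exact fun h => absurd (Finset.mem_univ _) h

end FreezeAux

/-- Complete freezing of a rectangular block: for colours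
`0 ≤ i < j ≤ n+m`,
`⟨(i^M)⊗(j^K)|Z_{M,K}(x;y)|(j^K)⊗(i^M)⟩ = t^{[i>0]MK} Π_{a,b}(y_b-x_a)/(y_b-tx_a)`. -/
theorem statement14 (n m : ℕ) (hnm : 1 ≤ n + m) (M Kc : ℕ) (hM : 1 ≤ M) (hK : 1 ≤ Kc)
    (i j : ℕ) (hij : i < j) (hj : j ≤ n + m) :
    Zop n (n + m) M Kc xg (fun b => vr (2 + M + b))
        (fun p => if p.val < M then (⟨i, by omega⟩ : Fin (n + m + 1)) else ⟨j, by omega⟩)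
        (fun p => if p.val < Kc then (⟨j, by omega⟩ : Fin (n + m + 1)) else ⟨i, by omega⟩) =
      tv ^ (if 0 < i then M * Kc else 0) *
        ∏ a ∈ Finset.range M, ∏ b ∈ Finset.range Kc,
          (vr (2 + M + b) - xg a) / (vr (2 + M + b) - tv * xg a) := by
  have hbra : (fun p : Fin (M + Kc) =>
        if p.val < M then (⟨i, by omega⟩ : Fin (n + m + 1)) else ⟨j, by omega⟩) =
      chiW (n + m) (M + Kc) M 0 M ⟨i, by omega⟩ ⟨j, by omega⟩ := by
    funext p
    simp only [chiW]
    split_ifs with h1 h2 <;> first | rfl | omega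
  have hket : (fun p : Fin (M + Kc) =>
        if p.val < Kc then (⟨j, by omega⟩ : Fin (n + m + 1)) else ⟨i, by omega⟩) =
      chiW (n + m) (M + Kc) M Kc M ⟨i, by omega⟩ ⟨j, by omega⟩ := by
    funext p
    have hpl := p.isLt
    simp only [chiW]
    split_ifs with h1 h2 <;> first | rfl | omega
  rw [hbra, hket]
  unfold Zop
  rw [List.range_eq_range',
    zrows xg (fun b => vr (2 + M + b)) hij hj Kc 0 (Nat.zero_add Kc)]
  have hterm : ∀ a b' : ℕ, wtc i (xg a / vr (2 + M + b')) =
      (if 0 < i then tv else 1) *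
        ((vr (2 + M + b') - xg a) / (vr (2 + M + b') - tv * xg a)) := by
    intro a b'
    unfold wtc
    congr 1
    have hy : vr (2 + M + b') ≠ 0 := vr_ne_zero _
    have h1 : vr (2 + M + b') - xg a =
        vr (2 + M + b') * (1 - xg a / vr (2 + M + b')) := by
      field_simp
    have h2 : vr (2 + M + b') - tv * xg a =
        vr (2 + M + b') * (1 - tv * (xg a / vr (2 + M + b'))) := by
      field_simp
    rw [h1, h2, mul_div_mul_left _ _ hy]
  rw [← Finset.range_eq_Ico]
  simp_rw [hterm, Finset.prod_mul_distrib, Finset.prod_const, Finset.card_range]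
  rw [← pow_mul, Finset.prod_comm]
  congr 1
  by_cases hi : 0 < i <;> simp [hi]

end ConicVertex
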